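/- Let p ≥ 0 be an integer, n* > 0 with n* ≠ 1, ε > 0, and let κ : (n*−ε, n*+ε) → ℂ be a continuous ITE trajectory (F_p(κ(n), n) = 0 for all n) that is differentiable at every n ≠ n*. Suppose κ(n*) = κ* > 0 with J_p(κ*) = 0 and J_p'(κ*) ≠ 0, and that J_p(κ(n)) ≠ 0 and J_p(√n·κ(n)) ≠ 0 for every n ≠ n*. Then |κ'(n)| → ∞ as n → n*. -/

import Mathlib

open Complex Real Filter Set
open Topology

/-- Bessel function of the first kind of integer order `p`. -/
noncomputable def besselJ (p : ℕ) (z : ℂ) : ℂ :=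
  ∑' m : ℕ, ((-1 : ℂ) ^ m / ((Nat.factorial m : ℂ) * (Nat.factorial (m + p) : ℂ)))
    * (z / 2) ^ (2 * m + p)

/-- Derivative of the Bessel function. -/
noncomputable def besselJ' (p : ℕ) (z : ℂ) : ℂ := deriv (besselJ p) z

/-- The ITE determinant function `F_p(κ, n)`. -/
noncomputable def Fp (p : ℕ) (κ : ℂ) (n : ℝ) : ℂ :=
  κ * (besselJ' p κ * besselJ p ((Real.sqrt n : ℂ) * κ)
    - (Real.sqrt n : ℂ) * besselJ p κ * besselJ' p ((Real.sqrt n : ℂ) * κ))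


section BesselAux
noncomputable section


/-- coefficient -/
def bc (p m : ℕ) : ℂ :=
  (-1 : ℂ) ^ m / ((Nat.factorial m : ℂ) * (Nat.factorial (m + p) : ℂ))

/-- falling-factorial type coefficient -/
def bq (p t m : ℕ) : ℕ := ∏ i ∈ Finset.range t, (2 * m + p - i)

/-- `t`-th derivative term of the Bessel series -/
def bt (p t m : ℕ) (z : ℂ) : ℂ :=
  bc p m * (bq p t m : ℂ) * (z / 2) ^ (2 * m + p - t) * (2⁻¹ : ℂ) ^ t

lemma norm_bc (p m : ℕ) : ‖bc p m‖ = 1 / ((Nat.factorial m : ℝ) * (Nat.factorial (m + p) : ℝ)) := by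
  simp [bc, norm_div, norm_mul]

lemma summable_master (p j : ℕ) (A : ℝ) (hA : 0 ≤ A) :
    Summable (fun m : ℕ => ((m : ℝ) + 1) ^ j * A ^ m /
      ((Nat.factorial m : ℝ) * (Nat.factorial (m + p) : ℝ))) := by
  apply summable_of_ratio_norm_eventually_le (r := 1/2) (by norm_num)
  filter_upwards [eventually_ge_atTop ⌈(2:ℝ)^(j+1) * A⌉₊] with m hm
  have hmA : (2:ℝ)^(j+1) * A ≤ (m:ℝ) + 1 := by
    have h1 := Nat.le_ceil ((2:ℝ)^(j+1) * A)
    have h2 : ((⌈(2:ℝ)^(j+1) * A⌉₊ : ℕ) : ℝ) ≤ (m:ℝ) := Nat.cast_le.mpr hm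
    linarith
  have h1 : ((Nat.factorial (m+1) : ℝ)) = ((m:ℝ)+1) * Nat.factorial m := by
    rw [Nat.factorial_succ]; push_cast; ring
  have h2 : ((Nat.factorial (m+1+p) : ℝ)) = ((m:ℝ)+1+(p:ℝ)) * Nat.factorial (m+p) := by
    have h : m + 1 + p = (m + p) + 1 := by ring
    rw [h, Nat.factorial_succ]; push_cast; ring
  rw [Real.norm_of_nonneg (by positivity), Real.norm_of_nonneg (by positivity)]
  push_cast
  rw [h1, h2]
  have key : ((m:ℝ)+1+1)^j ≤ 2^j * ((m:ℝ)+1)^j := by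
    rw [← mul_pow]
    apply pow_le_pow_left₀ (by positivity)
    linarith
  have hden : ((m:ℝ)+1) * Nat.factorial m * (1 * Nat.factorial (m+p)) ≤
      ((m:ℝ)+1) * Nat.factorial m * (((m:ℝ)+1+(p:ℝ)) * Nat.factorial (m+p)) := by
    have hp : (1:ℝ) ≤ (m:ℝ)+1+(p:ℝ) := by
      have := Nat.cast_nonneg (α := ℝ) p
      have := Nat.cast_nonneg (α := ℝ) m
      linarith
    have hfm : (0:ℝ) < Nat.factorial m := by positivity
    have hfmp : (0:ℝ) < Nat.factorial (m+p) := by positivity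
    have hm1 : (0:ℝ) < (m:ℝ)+1 := by positivity
    nlinarith [mul_pos (mul_pos hm1 hfm) hfmp]
  calc ((m:ℝ)+1+1)^j * A^(m+1) / (((m:ℝ)+1) * Nat.factorial m * (((m:ℝ)+1+(p:ℝ)) * Nat.factorial (m+p)))
      ≤ (2^j * ((m:ℝ)+1)^j) * A^(m+1) / (((m:ℝ)+1) * Nat.factorial m * (1 * Nat.factorial (m+p))) := by
        apply div_le_div₀ (by positivity)
          (mul_le_mul_of_nonneg_right key (by positivity)) (by positivity) hden
    _ = (2^j * A / ((m:ℝ)+1)) * (((m:ℝ)+1)^j * A^m / (Nat.factorial m * Nat.factorial (m+p))) := by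
        rw [pow_succ]
        have hf1 : (Nat.factorial m : ℝ) ≠ 0 := by positivity
        have hf2 : (Nat.factorial (m+p) : ℝ) ≠ 0 := by positivity
        field_simp
    _ ≤ (1/2) * (((m:ℝ)+1)^j * A^m / (Nat.factorial m * Nat.factorial (m+p))) := by
        apply mul_le_mul_of_nonneg_right _ (by positivity)
        rw [div_le_iff₀ (by positivity)]
        rw [pow_succ] at hmA
        nlinarith

/-- uniform bound for `bt p t` (any `t ≤ 2`) on the ball of radius `R` -/
def ub (p : ℕ) (R : ℝ) (m : ℕ) : ℝ :=
  (2*((p:ℝ)+1))^2 * (max 1 (R/2))^p *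
    (((m:ℝ)+1)^3 * ((max 1 (R/2))^2)^m / ((Nat.factorial m : ℝ) * (Nat.factorial (m+p) : ℝ)))

lemma summable_ub (p : ℕ) (R : ℝ) : Summable (ub p R) := by
  unfold ub
  exact (summable_master p 3 ((max 1 (R/2))^2) (by positivity)).mul_left _

lemma bt_norm_le (p t : ℕ) (ht : t ≤ 2) (R : ℝ) (m : ℕ) (z : ℂ)
    (hz : ‖z‖ ≤ R) : ‖bt p t m z‖ ≤ ub p R m := by
  set M := max 1 (R/2) with hM
  have hM1 : (1:ℝ) ≤ M := le_max_left _ _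
  have hM0 : (0:ℝ) ≤ M := le_trans zero_le_one hM1
  have hzM : ‖z/2‖ ≤ M := by
    rw [norm_div]
    simp only [Complex.norm_ofNat]
    calc ‖z‖ / 2 ≤ R / 2 := by linarith
      _ ≤ M := le_max_right _ _
  have hbq : (bq p t m : ℝ) ≤ (2*((p:ℝ)+1))^2 * ((m:ℝ)+1)^3 := by
    have h1 : bq p t m ≤ (2*m+p)^t := by
      unfold bq
      calc (∏ i ∈ Finset.range t, (2 * m + p - i)) ≤ ∏ i ∈ Finset.range t, (2*m+p) :=
        Finset.prod_le_prod (fun _ _ => Nat.zero_le _) (fun i _ => Nat.sub_le _ _)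
      _ = (2*m+p)^t := by rw [Finset.prod_const, Finset.card_range]
    have h2 : (2*m+p)^t ≤ (2*(p+1)*(m+1))^t := by
      apply Nat.pow_le_pow_left; nlinarith
    have h3 : (2*(p+1)*(m+1))^t ≤ (2*(p+1)*(m+1))^2 :=
      Nat.pow_le_pow_right (by positivity) ht
    have : (bq p t m : ℝ) ≤ ((2*(p+1)*(m+1))^2 : ℕ) := by
      exact_mod_cast le_trans h1 (le_trans h2 h3)
    calc (bq p t m : ℝ) ≤ ((2*(p+1)*(m+1))^2 : ℕ) := this
      _ = (2*((p:ℝ)+1))^2 * ((m:ℝ)+1)^2 := by push_cast; ring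
      _ ≤ (2*((p:ℝ)+1))^2 * ((m:ℝ)+1)^3 := by
          have : ((m:ℝ)+1)^2 ≤ ((m:ℝ)+1)^3 := by
            apply pow_le_pow_right₀ (by linarith [Nat.cast_nonneg (α := ℝ) m]) (by norm_num)
          nlinarith [sq_nonneg (2*((p:ℝ)+1))]
  have hpow : ‖z/2‖ ^ (2*m+p-t) ≤ M^p * (M^2)^m := by
    calc ‖z/2‖ ^ (2*m+p-t) ≤ M ^ (2*m+p-t) :=
          pow_le_pow_left₀ (norm_nonneg _) hzM _
      _ ≤ M ^ (2*m+p) := pow_le_pow_right₀ hM1 (Nat.sub_le _ _)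
      _ = M^p * (M^2)^m := by rw [← pow_mul, ← pow_add]; ring_nf
  have hhalf : ((2:ℝ)⁻¹)^t ≤ 1 := by
    apply pow_le_one₀ (by norm_num) (by norm_num)
  have : ‖bt p t m z‖ = (1 / ((Nat.factorial m : ℝ) * (Nat.factorial (m+p) : ℝ)))
      * (bq p t m : ℝ) * ‖z/2‖ ^ (2*m+p-t) * ((2:ℝ)⁻¹)^t := by
    unfold bt
    rw [norm_mul, norm_mul, norm_mul, norm_bc]
    simp [norm_pow]
  rw [this]
  unfold ub
  have hfm : (0:ℝ) < (Nat.factorial m : ℝ) * (Nat.factorial (m+p) : ℝ) := by positivity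
  calc (1 / ((Nat.factorial m : ℝ) * (Nat.factorial (m+p) : ℝ)))
      * (bq p t m : ℝ) * ‖z/2‖ ^ (2*m+p-t) * ((2:ℝ)⁻¹)^t
      ≤ (1 / ((Nat.factorial m : ℝ) * (Nat.factorial (m+p) : ℝ)))
      * ((2*((p:ℝ)+1))^2 * ((m:ℝ)+1)^3) * (M^p * (M^2)^m) * 1 := by
        gcongr
    _ = (2*((p:ℝ)+1))^2 * M^p *
        (((m:ℝ)+1)^3 * (M^2)^m / ((Nat.factorial m : ℝ) * (Nat.factorial (m+p) : ℝ))) := by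
        field_simp

lemma bt_hasDerivAt (p t m : ℕ) (z : ℂ) : HasDerivAt (bt p t m) (bt p (t+1) m z) z := by
  have h1 : HasDerivAt (fun w : ℂ => (w/2)^(2*m+p-t))
      (((2*m+p-t : ℕ) : ℂ) * (z/2)^(2*m+p-t-1) * (1/2)) z := by
    exact (HasDerivAt.div_const (hasDerivAt_id z) 2).pow _
  have h2 := (h1.const_mul (bc p m * (bq p t m : ℂ))).mul_const ((2⁻¹ : ℂ)^t)
  refine h2.congr_deriv ?_
  unfold bt bq
  rw [Finset.prod_range_succ]
  have he : 2*m+p-t-1 = 2*m+p-(t+1) := by omega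
  rw [he, Nat.cast_mul, pow_succ]
  ring

lemma summable_bt (p t : ℕ) (ht : t ≤ 2) (z : ℂ) : Summable (fun m => bt p t m z) :=
  Summable.of_norm_bounded (summable_ub p ‖z‖)
    (fun m => bt_norm_le p t ht _ m z le_rfl)

lemma besselJ_eq_bt0 (p : ℕ) : besselJ p = fun z => ∑' m, bt p 0 m z := by
  funext z
  unfold besselJ
  exact tsum_congr fun m => by simp [bt, bq, bc]

lemma differentiable_btsum (p t : ℕ) (ht : t ≤ 2) :
    Differentiable ℂ (fun z => ∑' m, bt p t m z) := by
  intro z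
  set R := ‖z‖ + 1 with hR
  have hzR : z ∈ Metric.ball (0:ℂ) R := by
    simp [Metric.mem_ball, hR, Complex.dist_eq]
  apply (differentiableOn_tsum_of_summable_norm (summable_ub p R)
    (fun m => fun w _ => ((bt_hasDerivAt p t m w).differentiableAt).differentiableWithinAt)
    Metric.isOpen_ball
    (fun m w hw => bt_norm_le p t ht R m w (by
      rw [Metric.mem_ball, Complex.dist_eq, sub_zero] at hw; exact le_of_lt hw))).differentiableAt
    (Metric.isOpen_ball.mem_nhds hzR)

lemma deriv_btsum (p t : ℕ) (ht : t + 1 ≤ 2) (z : ℂ) :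
    deriv (fun w => ∑' m, bt p t m w) z = ∑' m, bt p (t+1) m z := by
  set R := ‖z‖ + 1 with hR
  have hzR : z ∈ Metric.ball (0:ℂ) R := by
    simp [Metric.mem_ball, hR, Complex.dist_eq]
  have h := hasSum_deriv_of_summable_norm (F := fun m => bt p t m) (summable_ub p R)
    (fun m => fun w _ => ((bt_hasDerivAt p t m w).differentiableAt).differentiableWithinAt)
    Metric.isOpen_ball
    (fun m w hw => bt_norm_le p t (by omega) R m w (by
      rw [Metric.mem_ball, Complex.dist_eq, sub_zero] at hw; exact le_of_lt hw)) hzR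
  have h2 : (fun m => deriv (bt p t m) z) = fun m => bt p (t+1) m z :=
    funext fun m => (bt_hasDerivAt p t m z).deriv
  rw [h2] at h
  exact h.tsum_eq.symm

lemma besselJ_differentiable (p : ℕ) : Differentiable ℂ (besselJ p) := by
  rw [besselJ_eq_bt0]; exact differentiable_btsum p 0 (by norm_num)

lemma besselJ'_eq_bt1 (p : ℕ) : besselJ' p = fun z => ∑' m, bt p 1 m z := by
  funext z
  unfold besselJ'
  rw [besselJ_eq_bt0]
  exact deriv_btsum p 0 (by norm_num) z

lemma besselJ'_differentiable (p : ℕ) : Differentiable ℂ (besselJ' p) := by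
  rw [besselJ'_eq_bt1]; exact differentiable_btsum p 1 (by norm_num)

lemma deriv_besselJ'_eq_bt2 (p : ℕ) : deriv (besselJ' p) = fun z => ∑' m, bt p 2 m z := by
  funext z
  rw [besselJ'_eq_bt1]
  exact deriv_btsum p 1 (by norm_num) z

lemma deriv_besselJ'_continuous (p : ℕ) : Continuous (deriv (besselJ' p)) := by
  rw [deriv_besselJ'_eq_bt2]
  exact (differentiable_btsum p 2 (by norm_num)).continuous

lemma bt_ode_term (p m : ℕ) (z : ℂ) :
    z^2 * bt p 2 m z + z * bt p 1 m z + (z^2 - (p:ℂ)^2) * bt p 0 m z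
    = (4*(m:ℂ)*((m:ℂ)+(p:ℂ))) * bc p m * (z/2)^(2*m+p)
      + 4 * bc p m * (z/2)^(2*m+p+2) := by
  unfold bt bq
  simp only [Finset.prod_range_succ, Finset.prod_range_zero, Finset.prod_range_one, one_mul]
  rcases Nat.lt_or_ge (2*m+p) 2 with hk | hk
  · have hm : m = 0 := by omega
    subst hm
    have hp : p < 2 := by omega
    interval_cases p <;> norm_num <;> ring
  · obtain ⟨K, hK⟩ : ∃ K, 2*m+p = K+2 := ⟨2*m+p-2, by omega⟩
    have hKc : 2*(m:ℂ)+(p:ℂ) = (K:ℂ)+2 := by exact_mod_cast congrArg (Nat.cast : ℕ → ℂ) hK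
    rw [hK]
    have e0 : K + 2 - 0 = K + 2 := by omega
    have e1 : K + 2 - 1 = K + 1 := by omega
    have e2 : K + 2 - 2 = K := by omega
    rw [e0, e1, e2]
    push_cast
    linear_combination (-(bc p m) * z^2 * (z/2)^K * (1/4) *
      ((2*(m:ℂ)+(p:ℂ)) + ((K:ℂ)+2))) * hKc

lemma bc_rec (p m : ℕ) :
    4*((m:ℂ)+1)*((m:ℂ)+1+(p:ℂ)) * bc p (m+1) = -(4 * bc p m) := by
  unfold bc
  have h1 : ((Nat.factorial (m+1) : ℂ)) = ((m:ℂ)+1) * Nat.factorial m := by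
    rw [Nat.factorial_succ]; push_cast; ring
  have h2 : ((Nat.factorial (m+1+p) : ℂ)) = ((m:ℂ)+1+(p:ℂ)) * Nat.factorial (m+p) := by
    have h : m + 1 + p = (m + p) + 1 := by ring
    rw [h, Nat.factorial_succ]; push_cast; ring
  rw [h1, h2, pow_succ]
  have hf1 : ((Nat.factorial m : ℂ)) ≠ 0 := Nat.cast_ne_zero.mpr (Nat.factorial_ne_zero m)
  have hf2 : ((Nat.factorial (m+p) : ℂ)) ≠ 0 := Nat.cast_ne_zero.mpr (Nat.factorial_ne_zero (m+p))
  have hm1 : ((m:ℂ)+1) ≠ 0 := Nat.cast_add_one_ne_zero m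
  have hmp1 : ((m:ℂ)+1+(p:ℂ)) ≠ 0 := by
    have h : ((m:ℂ)+1+(p:ℂ)) = ((m+1+p : ℕ) : ℂ) := by push_cast; ring
    rw [h]
    exact Nat.cast_ne_zero.mpr (by omega)
  field_simp

lemma bessel_ode (p : ℕ) (z : ℂ) :
    z^2 * deriv (besselJ' p) z + z * besselJ' p z + (z^2 - (p:ℂ)^2) * besselJ p z = 0 := by
  set A : ℕ → ℂ := fun m => (4*(m:ℂ)*((m:ℂ)+(p:ℂ))) * bc p m * (z/2)^(2*m+p) with hAdef
  set B : ℕ → ℂ := fun m => 4 * bc p m * (z/2)^(2*m+p+2) with hBdef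
  have hB : Summable B := by
    have h := (summable_bt p 0 (by norm_num) z).mul_left (4*(z/2)^2)
    apply h.congr
    intro m
    simp only [hBdef, bt, bq, Finset.prod_range_zero, Nat.cast_one, pow_zero, Nat.sub_zero,
      pow_add]
    ring
  have hAB : ∀ m, A (m+1) = - B m := by
    intro m
    simp only [hAdef, hBdef]
    have hexp : 2*(m+1)+p = 2*m+p+2 := by ring
    rw [hexp]
    push_cast
    linear_combination ((z/2)^(2*m+p+2)) * bc_rec p m
  have hA : Summable A := by
    rw [← summable_nat_add_iff 1]
    exact hB.neg.congr (fun m => (hAB m).symm)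
  have h0 : besselJ p z = ∑' m, bt p 0 m z := congrFun (besselJ_eq_bt0 p) z
  have h1 : besselJ' p z = ∑' m, bt p 1 m z := congrFun (besselJ'_eq_bt1 p) z
  have h2 : deriv (besselJ' p) z = ∑' m, bt p 2 m z := congrFun (deriv_besselJ'_eq_bt2 p) z
  rw [h0, h1, h2]
  rw [← tsum_mul_left, ← tsum_mul_left, ← tsum_mul_left]
  rw [← Summable.tsum_add ((summable_bt p 2 (by norm_num) z).mul_left _)
      ((summable_bt p 1 (by norm_num) z).mul_left _),
    ← Summable.tsum_add (((summable_bt p 2 (by norm_num) z).mul_left _).add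
      ((summable_bt p 1 (by norm_num) z).mul_left _))
      ((summable_bt p 0 (by norm_num) z).mul_left _)]
  have hterm : ∀ m : ℕ, z^2 * bt p 2 m z + z * bt p 1 m z + (z^2 - (p:ℂ)^2) * bt p 0 m z
      = A m + B m := fun m => bt_ode_term p m z
  rw [tsum_congr hterm, Summable.tsum_add hA hB, Summable.tsum_eq_zero_add hA]
  have hA0 : A 0 = 0 := by simp [hAdef]
  rw [hA0, tsum_congr hAB, tsum_neg]
  ring

lemma AnalyticAt.deriv' {f : ℂ → ℂ} {z : ℂ} (h : AnalyticAt ℂ f z) :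
    AnalyticAt ℂ (deriv f) z := by
  have hOn : AnalyticOnNhd ℂ f {z} := by
    intro u hu
    rw [mem_singleton_iff] at hu
    exact hu ▸ h
  exact hOn.deriv z rfl

lemma bessel_simple_zero (p : ℕ) (w z0 : ℂ) (hw : besselJ' p w ≠ 0) (h0 : z0 ≠ 0)
    (hz : besselJ p z0 = 0) (hz' : besselJ' p z0 = 0) : False := by
  have hA : AnalyticAt ℂ (besselJ p) z0 :=
    ((besselJ_differentiable p).differentiableOn.analyticOnNhd isOpen_univ) z0 (mem_univ z0)
  have hne : ¬ (∀ᶠ z in 𝓝 z0, besselJ p z = 0) := by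
    intro h
    have hOn : AnalyticOnNhd ℂ (besselJ p) univ :=
      (besselJ_differentiable p).differentiableOn.analyticOnNhd isOpen_univ
    have heq := hOn.eqOn_zero_of_preconnected_of_eventuallyEq_zero isPreconnected_univ
      (mem_univ z0) h
    apply hw
    have hJ0 : besselJ p = fun _ => (0:ℂ) := funext fun z => heq (mem_univ z)
    show deriv (besselJ p) w = 0
    rw [hJ0]
    simp
  have horder : analyticOrderAt (besselJ p) z0 ≠ ⊤ := fun h => hne (analyticOrderAt_eq_top.mp h)
  lift analyticOrderAt (besselJ p) z0 to ℕ using horder with k hk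
  obtain ⟨g, hg, hg0, hev⟩ := (hA.analyticOrderAt_eq_natCast).mp hk.symm
  have hev' : ∀ᶠ z in 𝓝 z0, besselJ p z = (z - z0)^k * g z := by
    filter_upwards [hev] with z h
    simpa [smul_eq_mul] using h
  have hk0 : k ≠ 0 := by
    intro h
    subst h
    have h1 := hev'.self_of_nhds
    rw [hz] at h1
    simp at h1
    exact hg0 h1.symm
  have hk1 : k ≠ 1 := by
    intro h
    subst h
    have hfun : ∀ᶠ z in 𝓝 z0, besselJ p z = (z - z0) * g z := by
      filter_upwards [hev'] with z h; simpa using h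
    have hd : HasDerivAt (fun z => (z - z0) * g z)
        (1 * g z0 + (z0 - z0) * deriv g z0) z0 :=
      ((hasDerivAt_id z0).sub_const z0).mul hg.differentiableAt.hasDerivAt
    have : besselJ' p z0 = g z0 := by
      show deriv (besselJ p) z0 = g z0
      rw [Filter.EventuallyEq.deriv_eq hfun, hd.deriv]
      simp
    rw [hz'] at this
    exact hg0 this.symm
  obtain ⟨K, rfl⟩ : ∃ K, k = K + 2 := ⟨k - 2, by omega⟩
  set g1 := deriv g with hg1def
  set g2 := deriv g1 with hg2def
  have hgev : ∀ᶠ z in 𝓝 z0, AnalyticAt ℂ g z := hg.eventually_analyticAt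
  have hJ1 : ∀ᶠ z in 𝓝 z0, besselJ' p z
      = ((K:ℂ)+2) * (z - z0)^(K+1) * g z + (z - z0)^(K+2) * g1 z := by
    filter_upwards [hgev, hev'.eventually_nhds] with z hgz hevz
    have h1 : HasDerivAt (fun u : ℂ => (u - z0)^(K+2))
        (((K+2 : ℕ):ℂ) * (z - z0)^(K+2-1) * 1) z :=
      (((hasDerivAt_id z).sub_const z0).pow _)
    have h2 := h1.mul hgz.differentiableAt.hasDerivAt
    show deriv (besselJ p) z = _
    rw [Filter.EventuallyEq.deriv_eq hevz, (show deriv (fun x => (x - z0) ^ (K + 2) * g x) z = _ from h2.deriv)]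
    push_cast [Nat.add_sub_cancel]
    ring
  have hJ2 : ∀ᶠ z in 𝓝 z0, deriv (besselJ' p) z
      = ((K:ℂ)+2)*((K:ℂ)+1)*(z - z0)^K * g z + 2*((K:ℂ)+2)*(z - z0)^(K+1) * g1 z
        + (z - z0)^(K+2) * g2 z := by
    filter_upwards [hgev, hJ1.eventually_nhds] with z hgz hevz
    have ha : HasDerivAt (fun u : ℂ => (u - z0)^(K+1))
        (((K+1 : ℕ):ℂ) * (z - z0)^(K+1-1) * 1) z :=
      (((hasDerivAt_id z).sub_const z0).pow _)
    have hb : HasDerivAt (fun u : ℂ => (u - z0)^(K+2))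
        (((K+2 : ℕ):ℂ) * (z - z0)^(K+2-1) * 1) z :=
      (((hasDerivAt_id z).sub_const z0).pow _)
    have hgz1 : AnalyticAt ℂ g1 z := hgz.deriv'
    have hd := ((ha.const_mul ((K:ℂ)+2)).mul hgz.differentiableAt.hasDerivAt).add
      (hb.mul hgz1.differentiableAt.hasDerivAt)
    have hfun : ∀ᶠ u in 𝓝 z, besselJ' p u
        = ((K:ℂ)+2) * (u - z0)^(K+1) * g u + (u - z0)^(K+2) * g1 u := hevz
    rw [Filter.EventuallyEq.deriv_eq hfun]
    have : deriv (fun u => ((K:ℂ)+2) * (u - z0)^(K+1) * g u + (u - z0)^(K+2) * g1 u) z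
        = _ := hd.deriv
    rw [this]
    push_cast [Nat.add_sub_cancel]
    ring
  set χ : ℂ → ℂ := fun z => z^2*( ((K:ℂ)+2)*((K:ℂ)+1)* g z + 2*((K:ℂ)+2)*(z - z0)* g1 z
      + (z - z0)^2 * g2 z) + z*(z - z0)*(((K:ℂ)+2)* g z + (z - z0) * g1 z)
      + (z^2 - (p:ℂ)^2)*(z - z0)^2* g z with hχdef
  have hχ0 : ∀ᶠ z in 𝓝[≠] z0, χ z = 0 := by
    filter_upwards [(hev'.and (hJ1.and hJ2)).filter_mono nhdsWithin_le_nhds,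
      self_mem_nhdsWithin] with z hz3 hz0'
    obtain ⟨h1, h2, h3⟩ := hz3
    have hode := bessel_ode p z
    rw [h1, h2, h3] at hode
    have he : (z - z0) ≠ 0 := sub_ne_zero.mpr hz0'
    have heK : (z - z0)^K ≠ 0 := pow_ne_zero _ he
    have hkey : (z - z0)^K * χ z = 0 := by
      rw [← hode]
      simp only [hχdef]
      ring
    exact (mul_eq_zero.mp hkey).resolve_left heK
  have hχcont : ContinuousAt χ z0 := by
    have hgc : ContinuousAt g z0 := hg.continuousAt
    have hg1c : ContinuousAt g1 z0 := hg.deriv'.continuousAt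
    have hg2c : ContinuousAt g2 z0 := hg.deriv'.deriv'.continuousAt
    simp only [hχdef]
    fun_prop
  have hlim1 : Tendsto χ (𝓝[≠] z0) (𝓝 (χ z0)) := hχcont.continuousWithinAt
  have hlim2 : Tendsto χ (𝓝[≠] z0) (𝓝 0) :=
    tendsto_const_nhds.congr' (hχ0.mono fun z h => h.symm)
  have hχz0 : χ z0 = 0 := tendsto_nhds_unique hlim1 hlim2
  have hfac : χ z0 = z0^2*(((K:ℂ)+2)*((K:ℂ)+1)) * g z0 := by
    simp only [hχdef]
    ring
  rw [hfac] at hχz0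
  have hne2 : z0^2*(((K:ℂ)+2)*((K:ℂ)+1)) ≠ 0 := by
    apply mul_ne_zero (pow_ne_zero _ h0)
    apply mul_ne_zero
    · have h : ((K:ℂ)+2) = ((K+2 : ℕ):ℂ) := by push_cast; ring
      rw [h]; exact Nat.cast_ne_zero.mpr (by omega)
    · have h : ((K:ℂ)+1) = ((K+1 : ℕ):ℂ) := by push_cast; ring
      rw [h]; exact Nat.cast_ne_zero.mpr (by omega)
  exact hg0 ((mul_eq_zero.mp hχz0).resolve_left hne2)


end
end BesselAux

/-- the trajectory derivative blows up at an IDE. -/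
theorem stmt_6 (p : ℕ) (nst : ℝ) (hnst : 0 < nst) (hnst1 : nst ≠ 1) (ε : ℝ) (hε : 0 < ε)
    (κ : ℝ → ℂ) (hcont : ContinuousOn κ (Set.Ioo (nst - ε) (nst + ε)))
    (hF : ∀ n ∈ Set.Ioo (nst - ε) (nst + ε), Fp p (κ n) n = 0)
    (hdiff : ∀ n ∈ Set.Ioo (nst - ε) (nst + ε), n ≠ nst → DifferentiableAt ℝ κ n)
    (κs : ℝ) (hκs : 0 < κs) (hval : κ nst = (κs : ℂ))
    (hJ : besselJ p (κs : ℂ) = 0) (hJ' : besselJ' p (κs : ℂ) ≠ 0)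
    (hJne : ∀ n ∈ Set.Ioo (nst - ε) (nst + ε), n ≠ nst →
      besselJ p (κ n) ≠ 0 ∧ besselJ p ((Real.sqrt n : ℂ) * κ n) ≠ 0) :
    Filter.Tendsto (fun n => ‖deriv κ n‖)
      (nhdsWithin nst (Set.Ioo (nst - ε) (nst + ε) \ {nst})) Filter.atTop := by
  have hnstI : nst ∈ Set.Ioo (nst - ε) (nst + ε) := by constructor <;> linarith
  have hκs0 : (κs : ℂ) ≠ 0 := Complex.ofReal_ne_zero.mpr (ne_of_gt hκs)
  have hsqpos : 0 < Real.sqrt nst := Real.sqrt_pos.mpr hnst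
  have hzst0 : ((Real.sqrt nst : ℝ) : ℂ) * (κs : ℂ) ≠ 0 :=
    mul_ne_zero (Complex.ofReal_ne_zero.mpr hsqpos.ne') hκs0
  -- J vanishes at the transformed point
  have hJzst : besselJ p (((Real.sqrt nst : ℝ) : ℂ) * (κs : ℂ)) = 0 := by
    have hFnst := hF nst hnstI
    rw [hval] at hFnst
    unfold Fp at hFnst
    rw [hJ] at hFnst
    have h2 := (mul_eq_zero.mp hFnst).resolve_left hκs0
    simp only [mul_zero, zero_mul, sub_zero] at h2
    exact (mul_eq_zero.mp h2).resolve_left hJ'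
  -- the transformed point is a simple zero
  have hJ1zst : besselJ' p (((Real.sqrt nst : ℝ) : ℂ) * (κs : ℂ)) ≠ 0 :=
    fun h => bessel_simple_zero p (κs : ℂ) _ hJ' hzst0 hJzst h
  have hJd : Differentiable ℂ (besselJ p) := besselJ_differentiable p
  have hJ1d : Differentiable ℂ (besselJ' p) := besselJ'_differentiable p
  have hJ2c : Continuous (deriv (besselJ' p)) := deriv_besselJ'_continuous p
  -- the open set E
  set E : Set ℝ := (Set.Ioo (nst - ε) (nst + ε) ∩ κ ⁻¹' ({0}ᶜ)) ∩ Set.Ioi (0:ℝ) with hEdef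
  have hEopen : IsOpen E :=
    (hcont.isOpen_inter_preimage isOpen_Ioo isOpen_compl_singleton).inter isOpen_Ioi
  have hnstE : nst ∈ E := by
    refine ⟨⟨hnstI, ?_⟩, hnst⟩
    simp only [Set.mem_preimage, Set.mem_compl_iff, Set.mem_singleton_iff, hval]
    exact hκs0
  have hG0 : ∀ n ∈ E, besselJ' p (κ n) * besselJ p ((Real.sqrt n : ℂ) * κ n)
      - (Real.sqrt n : ℂ) * besselJ p (κ n) * besselJ' p ((Real.sqrt n : ℂ) * κ n) = 0 := by
    intro n hn
    have h := hF n hn.1.1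
    unfold Fp at h
    have hκn0 : κ n ≠ 0 := hn.1.2
    exact (mul_eq_zero.mp h).resolve_left hκn0
  -- the implicit-differentiation identity
  have hkey : ∀ n ∈ E, n ≠ nst →
      (deriv (besselJ' p) (κ n) * besselJ p ((Real.sqrt n : ℂ) * κ n)
        - (Real.sqrt n : ℂ)^2 * besselJ p (κ n) * deriv (besselJ' p) ((Real.sqrt n : ℂ) * κ n))
        * deriv κ n
      + ((1/(2*Real.sqrt n) : ℝ) : ℂ) *
          (κ n * besselJ' p (κ n) * besselJ' p ((Real.sqrt n : ℂ) * κ n)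
          - besselJ p (κ n) * besselJ' p ((Real.sqrt n : ℂ) * κ n)
          - (Real.sqrt n : ℂ) * κ n * besselJ p (κ n)
              * deriv (besselJ' p) ((Real.sqrt n : ℂ) * κ n)) = 0 := by
    intro n hnE hne
    have hnpos : (0:ℝ) < n := hnE.2
    have hκd : HasDerivAt κ (deriv κ n) n := (hdiff n hnE.1.1 hne).hasDerivAt
    have hsd : HasDerivAt (fun m : ℝ => ((Real.sqrt m : ℝ) : ℂ))
        (((1/(2*Real.sqrt n) : ℝ) : ℂ)) n := (Real.hasDerivAt_sqrt hnpos.ne').ofReal_comp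
    have hτd : HasDerivAt (fun m : ℝ => ((Real.sqrt m : ℝ) : ℂ) * κ m)
        (((1/(2*Real.sqrt n) : ℝ) : ℂ) * κ n + ((Real.sqrt n : ℝ) : ℂ) * deriv κ n) n :=
      hsd.mul hκd
    have hJκ : HasDerivAt (fun m : ℝ => besselJ p (κ m)) (besselJ' p (κ n) * deriv κ n) n :=
      (hJd (κ n)).hasDerivAt.comp n hκd
    have hJ1κ : HasDerivAt (fun m : ℝ => besselJ' p (κ m))
        (deriv (besselJ' p) (κ n) * deriv κ n) n :=
      (hJ1d (κ n)).hasDerivAt.comp n hκd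
    have hJτ : HasDerivAt (fun m : ℝ => besselJ p (((Real.sqrt m : ℝ) : ℂ) * κ m))
        (besselJ' p (((Real.sqrt n : ℝ) : ℂ) * κ n) *
          (((1/(2*Real.sqrt n) : ℝ) : ℂ) * κ n + ((Real.sqrt n : ℝ) : ℂ) * deriv κ n)) n :=
      (hJd _).hasDerivAt.comp n hτd
    have hJ1τ : HasDerivAt (fun m : ℝ => besselJ' p (((Real.sqrt m : ℝ) : ℂ) * κ m))
        (deriv (besselJ' p) (((Real.sqrt n : ℝ) : ℂ) * κ n) *
          (((1/(2*Real.sqrt n) : ℝ) : ℂ) * κ n + ((Real.sqrt n : ℝ) : ℂ) * deriv κ n)) n :=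
      (hJ1d _).hasDerivAt.comp n hτd
    have hGd := (hJ1κ.mul hJτ).sub ((hsd.mul hJκ).mul hJ1τ)
    have hGzero : deriv (fun m : ℝ => besselJ' p (κ m) * besselJ p (((Real.sqrt m : ℝ) : ℂ) * κ m)
        - ((Real.sqrt m : ℝ) : ℂ) * besselJ p (κ m) * besselJ' p (((Real.sqrt m : ℝ) : ℂ) * κ m))
        n = 0 := by
      have hev : (fun m : ℝ => besselJ' p (κ m) * besselJ p (((Real.sqrt m : ℝ) : ℂ) * κ m)
          - ((Real.sqrt m : ℝ) : ℂ) * besselJ p (κ m)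
            * besselJ' p (((Real.sqrt m : ℝ) : ℂ) * κ m)) =ᶠ[nhds n] (fun _ => (0:ℂ)) := by
        filter_upwards [hEopen.mem_nhds hnE] with u hu
        exact hG0 u hu
      rw [Filter.EventuallyEq.deriv_eq hev]
      exact deriv_const n 0
    have hD0 := hGd.deriv
    replace hD0 : (0:ℂ) = _ := hGzero.symm.trans hD0
    simp only [Pi.mul_apply] at hD0
    linear_combination -hD0
  -- limit part
  set T : Set ℝ := Set.Ioo (nst - ε) (nst + ε) \ {nst} with hTdef
  set L := nhdsWithin nst T with hLdef
  have hκtend : Tendsto κ L (𝓝 (κs : ℂ)) := by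
    have h := (hcont.continuousAt (isOpen_Ioo.mem_nhds hnstI)).tendsto
    rw [hval] at h
    exact h.mono_left nhdsWithin_le_nhds
  have hstend : Tendsto (fun n : ℝ => ((Real.sqrt n : ℝ) : ℂ)) L
      (𝓝 ((Real.sqrt nst : ℝ) : ℂ)) :=
    ((Complex.continuous_ofReal.comp Real.continuous_sqrt).tendsto nst).mono_left
      nhdsWithin_le_nhds
  have hsdtend : Tendsto (fun n : ℝ => ((1/(2*Real.sqrt n) : ℝ) : ℂ)) L
      (𝓝 ((1/(2*Real.sqrt nst) : ℝ) : ℂ)) := by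
    apply Tendsto.mono_left _ nhdsWithin_le_nhds
    apply (Complex.continuous_ofReal.tendsto _).comp
    exact (continuousAt_const.div ((continuous_const.mul Real.continuous_sqrt).continuousAt)
      (by show (2:ℝ) * Real.sqrt nst ≠ 0; exact mul_ne_zero two_ne_zero hsqpos.ne')).tendsto
  have hτtend : Tendsto (fun n : ℝ => ((Real.sqrt n : ℝ):ℂ) * κ n) L
      (𝓝 (((Real.sqrt nst:ℝ):ℂ) * (κs:ℂ))) := hstend.mul hκtend
  have t1 : Tendsto (fun n => deriv (besselJ' p) (κ n)) L
      (𝓝 (deriv (besselJ' p) (κs:ℂ))) := (hJ2c.tendsto _).comp hκtend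
  have t2 : Tendsto (fun n => besselJ p (((Real.sqrt n:ℝ):ℂ) * κ n)) L
      (𝓝 (besselJ p (((Real.sqrt nst:ℝ):ℂ)*(κs:ℂ)))) := (hJd.continuous.tendsto _).comp hτtend
  have t3 : Tendsto (fun n => besselJ p (κ n)) L (𝓝 (besselJ p (κs:ℂ))) :=
    (hJd.continuous.tendsto _).comp hκtend
  have t4 : Tendsto (fun n => deriv (besselJ' p) (((Real.sqrt n:ℝ):ℂ)*κ n)) L
      (𝓝 (deriv (besselJ' p) (((Real.sqrt nst:ℝ):ℂ)*(κs:ℂ)))) := (hJ2c.tendsto _).comp hτtend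
  have t5 : Tendsto (fun n => besselJ' p (κ n)) L (𝓝 (besselJ' p (κs:ℂ))) :=
    (hJ1d.continuous.tendsto _).comp hκtend
  have t6 : Tendsto (fun n => besselJ' p (((Real.sqrt n:ℝ):ℂ)*κ n)) L
      (𝓝 (besselJ' p (((Real.sqrt nst:ℝ):ℂ)*(κs:ℂ)))) := (hJ1d.continuous.tendsto _).comp hτtend
  have hAtend : Tendsto (fun n => deriv (besselJ' p) (κ n)
      * besselJ p ((Real.sqrt n : ℂ) * κ n)
      - (Real.sqrt n : ℂ)^2 * besselJ p (κ n)
        * deriv (besselJ' p) ((Real.sqrt n : ℂ) * κ n)) L (𝓝 0) := by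
    have h := (t1.mul t2).sub (((hstend.pow 2).mul t3).mul t4)
    simpa [hJzst, hJ] using h
  have hBtend : Tendsto (fun n => ((1/(2*Real.sqrt n) : ℝ) : ℂ) *
      (κ n * besselJ' p (κ n) * besselJ' p ((Real.sqrt n : ℂ) * κ n)
      - besselJ p (κ n) * besselJ' p ((Real.sqrt n : ℂ) * κ n)
      - (Real.sqrt n : ℂ) * κ n * besselJ p (κ n)
          * deriv (besselJ' p) ((Real.sqrt n : ℂ) * κ n))) L
      (𝓝 (((1/(2*Real.sqrt nst) : ℝ) : ℂ) *
        ((κs:ℂ) * besselJ' p (κs:ℂ) * besselJ' p (((Real.sqrt nst:ℝ):ℂ)*(κs:ℂ))))) := by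
    have h := hsdtend.mul ((((hκtend.mul t5).mul t6).sub (t3.mul t6)).sub
      (((hstend.mul hκtend).mul t3).mul t4))
    simpa [hJ] using h
  have hLB0 : ((1/(2*Real.sqrt nst) : ℝ) : ℂ) *
      ((κs:ℂ) * besselJ' p (κs:ℂ) * besselJ' p (((Real.sqrt nst:ℝ):ℂ)*(κs:ℂ))) ≠ 0 :=
    mul_ne_zero (Complex.ofReal_ne_zero.mpr (by positivity))
      (mul_ne_zero (mul_ne_zero hκs0 hJ') hJ1zst)
  have hev_key : ∀ᶠ n in L, (deriv (besselJ' p) (κ n)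
      * besselJ p ((Real.sqrt n : ℂ) * κ n)
      - (Real.sqrt n : ℂ)^2 * besselJ p (κ n)
        * deriv (besselJ' p) ((Real.sqrt n : ℂ) * κ n)) * deriv κ n
      + ((1/(2*Real.sqrt n) : ℝ) : ℂ) *
      (κ n * besselJ' p (κ n) * besselJ' p ((Real.sqrt n : ℂ) * κ n)
      - besselJ p (κ n) * besselJ' p ((Real.sqrt n : ℂ) * κ n)
      - (Real.sqrt n : ℂ) * κ n * besselJ p (κ n)
          * deriv (besselJ' p) ((Real.sqrt n : ℂ) * κ n)) = 0 := by
    filter_upwards [mem_nhdsWithin_of_mem_nhds (hEopen.mem_nhds hnstE),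
      self_mem_nhdsWithin] with n hnE hnT
    exact hkey n hnE (by simpa using hnT.2)
  have hBa := (continuous_norm.tendsto _).comp hBtend
  have hAa : Tendsto (fun n => ‖deriv (besselJ' p) (κ n)
      * besselJ p ((Real.sqrt n : ℂ) * κ n)
      - (Real.sqrt n : ℂ)^2 * besselJ p (κ n)
        * deriv (besselJ' p) ((Real.sqrt n : ℂ) * κ n)‖) L (𝓝 0) := by
    simpa [Function.comp_def] using (continuous_norm.tendsto _).comp hAtend
  have hBpos : 0 < ‖((1/(2*Real.sqrt nst) : ℝ) : ℂ) *
      ((κs:ℂ) * besselJ' p (κs:ℂ) * besselJ' p (((Real.sqrt nst:ℝ):ℂ)*(κs:ℂ)))‖ :=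
    norm_pos_iff.mpr hLB0
  have hevB := hBa.eventually (eventually_gt_nhds hBpos)
  have hevA : ∀ᶠ n in L, (deriv (besselJ' p) (κ n)
      * besselJ p ((Real.sqrt n : ℂ) * κ n)
      - (Real.sqrt n : ℂ)^2 * besselJ p (κ n)
        * deriv (besselJ' p) ((Real.sqrt n : ℂ) * κ n)) ≠ 0 := by
    filter_upwards [hev_key, hevB] with n h1 h2
    intro h
    rw [h, zero_mul, zero_add] at h1
    rw [Function.comp_apply, h1] at h2
    simp at h2
  have hAinv : Tendsto (fun n => (‖deriv (besselJ' p) (κ n)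
      * besselJ p ((Real.sqrt n : ℂ) * κ n)
      - (Real.sqrt n : ℂ)^2 * besselJ p (κ n)
        * deriv (besselJ' p) ((Real.sqrt n : ℂ) * κ n)‖)⁻¹) L atTop := by
    apply Filter.Tendsto.inv_tendsto_nhdsGT_zero
    rw [tendsto_nhdsWithin_iff]
    refine ⟨hAa, hevA.mono fun n h => ?_⟩
    simpa using (norm_pos_iff.mpr h)
  have hfinal := Filter.Tendsto.pos_mul_atTop hBpos hBa hAinv
  refine Filter.Tendsto.congr' ?_ hfinal
  filter_upwards [hev_key, hevA] with n h1 h2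
  have hder : deriv κ n = -(((1/(2*Real.sqrt n) : ℝ) : ℂ) *
      (κ n * besselJ' p (κ n) * besselJ' p ((Real.sqrt n : ℂ) * κ n)
      - besselJ p (κ n) * besselJ' p ((Real.sqrt n : ℂ) * κ n)
      - (Real.sqrt n : ℂ) * κ n * besselJ p (κ n)
          * deriv (besselJ' p) ((Real.sqrt n : ℂ) * κ n)))
      / (deriv (besselJ' p) (κ n) * besselJ p ((Real.sqrt n : ℂ) * κ n)
      - (Real.sqrt n : ℂ)^2 * besselJ p (κ n)
        * deriv (besselJ' p) ((Real.sqrt n : ℂ) * κ n)) := by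
    rw [eq_div_iff h2]
    linear_combination h1
  show _ = ‖deriv κ n‖
  rw [hder, norm_div, norm_neg, div_eq_mul_inv]
  simp only [Function.comp_apply]
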